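/- Let F be a field of characteristic zero, A an additive abelian group, and ∂ : A → F an additive map with trivial kernel (∂(x) = 0 implies x = 0). Suppose f : A → F satisfies ∂(y − x)·f(x + y) = ∂(y)·f(y) − ∂(x)·f(x) for all x, y ∈ A. Then for any fixed x₀ ∈ A with x₀ ≠ 0, f(x) = ((f(2x₀) − f(x₀))/∂(x₀))·∂(x) + 2f(x₀) − f(2x₀) for all x ∈ A; in particular f(x) = b·∂(x) + a for some a, b ∈ F. -/
import Mathlib


theorem stmt_2 {F : Type*} [Field F] [CharZero F]
    {A : Type*} [AddCommGroup A]
    (d : A →+ F) (hd : ∀ x : A, d x = 0 → x = 0)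
    (f : A → F)
    (hf : ∀ x y : A, d (y - x) * f (x + y) = d y * f y - d x * f x)
    (x₀ : A) (hx₀ : x₀ ≠ 0) :
    (∀ x : A, f x = ((f (x₀ + x₀) - f x₀) / d x₀) * d x + (2 * f x₀ - f (x₀ + x₀))) ∧
    (∃ a b : F, ∀ x : A, f x = b * d x + a) := by
  have hd' : ∀ x : A, x ≠ 0 → d x ≠ 0 := fun x hx h => hx (hd x h)
  have hdx₀ : d x₀ ≠ 0 := hd' x₀ hx₀
  set c : F := (f (x₀ + x₀) - f 0) / d x₀ with hc
  have hB : ∀ x y : A, (d y - d x) * f (x + y) = d y * f y - d x * f x := by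
    intro x y
    have h := hf x y
    rwa [map_sub] at h
  have hodd : ∀ x : A, f (-x) = 2 * f 0 - f x := by
    intro x
    by_cases hx : x = 0
    · subst hx; simp; ring
    · have h := hB x (-x)
      rw [map_neg, add_neg_cancel] at h
      have h2 : d x * (f (-x) + f x - 2 * f 0) = 0 := by linear_combination h
      rcases mul_eq_zero.mp h2 with h3 | h3
      · exact absurd h3 (hd' x hx)
      · linear_combination h3
  have hA : ∀ x y : A, (d x + d y) * f (x - y) =
      2 * d y * f 0 - d y * f y + d x * f x := by
    intro x y
    have h := hB x (-y)
    rw [map_neg, ← sub_eq_add_neg, hodd y] at h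
    linear_combination -h
  have hC : ∀ x y : A, 2 * d y * f (x + x) =
      (d x + d y) * f (x + y) - (d x - d y) * f (x - y) := by
    intro x y
    have h := hB (x - y) (x + y)
    have e1 : x - y + (x + y) = x + x := by abel
    rw [e1, map_add, map_sub] at h
    linear_combination h
  have hD : ∀ x y : A, 2 * d x * f (y + y) =
      2 * (d x - d y) * f 0 - (d x - d y) * f (x - y) + (d x + d y) * f (x + y) := by
    intro x y
    have h := hA (x + y) (x - y)
    have e1 : x + y - (x - y) = y + y := by abel
    rw [e1, map_add, map_sub] at h
    linear_combination h
  have hdouble : ∀ x : A, f (x + x) = f 0 + c * d x := by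
    intro x
    have h1 := hC x x₀
    have h2 := hD x x₀
    have hE : d x * f (x₀ + x₀) - d x₀ * f (x + x) = (d x - d x₀) * f 0 := by
      linear_combination (h2 - h1) / 2
    rw [hc]
    field_simp
    linear_combination -hE
  have hmain : ∀ x : A, f x = f 0 + (c / 2) * d x := by
    intro x
    by_cases hx : x = 0
    · subst hx; simp
    · have hdx : d x ≠ 0 := hd' x hx
      have hF := hB x (x + x)
      rw [map_add] at hF
      rw [hdouble x] at hF
      have hG := hC (x + x) x
      have e1 : x + x - x = x := by abel
      have e2 : x + x + x = x + (x + x) := by abel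
      rw [e1, e2, map_add, hdouble (x + x), map_add] at hG
      have key : d x * (4 * f x - (4 * f 0 + 2 * c * d x)) = 0 := by
        linear_combination 3 * hF + hG
      rcases mul_eq_zero.mp key with h3 | h3
      · exact absurd h3 hdx
      · linear_combination h3 / 4
  have hx₀val : f x₀ = f 0 + (c / 2) * d x₀ := hmain x₀
  have h2x₀val : f (x₀ + x₀) = f 0 + c * d x₀ := hdouble x₀
  constructor
  · intro x
    rw [hmain x, hx₀val, h2x₀val]
    field_simp
    ring
  · refine ⟨f 0, c / 2, fun x => ?_⟩
    rw [hmain x]; ring
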